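/- Let H be a complex Hilbert space and suppose A, B are bounded self-adjoint operators with orthogonal decompositions into spectral parts as follows: projections p⁻, p, p⁺ for A and q⁻, q, q⁺ for B summing to the identity, such that ‖γ(A|_{ran p}) − γ(B|_{ran q})‖ < δ (as operators extended by zero), ‖p⁻ − q⁻‖ < δ, ‖p⁺ − q⁺‖ < δ, ‖γ(A|_{ran p⁺}) − p⁺‖ < δ, ‖γ(B|_{ran q⁺}) − q⁺‖ < δ, ‖γ(A|_{ran p⁻}) + p⁻‖ < δ, and ‖γ(B|_{ran q⁻}) + q⁻‖ < δ. Then ‖γ(A) − γ(B)‖ < 7δ. -/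

import Mathlib

/-- The key `7δ`-estimate: if the bounded transforms `γ(A)`, `γ(B)` of bounded
self-adjoint operators `A`, `B` decompose as sums of `γ` applied to their three spectral
parts (each extended by zero), the middle parts are `δ`-close, the outer projections are
`δ`-close, and each outer part is `δ`-close to `±` the corresponding projection, then
`‖γ(A) - γ(B)‖ < 7δ`. -/
theorem norm_gamma_sub_gamma_lt_seven_delta {H : Type*} [NormedAddCommGroup H]
    [InnerProductSpace ℂ H] [CompleteSpace H] (A B : H →L[ℂ] H)
    (hA : IsSelfAdjoint A) (hB : IsSelfAdjoint B) (δ : ℝ)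
    (Am A' Ap Bm B' Bp pm pp qm qp : H →L[ℂ] H)
    (hdecA : cfc (fun t : ℝ => t / Real.sqrt (1 + t ^ 2)) A = Am + A' + Ap)
    (hdecB : cfc (fun t : ℝ => t / Real.sqrt (1 + t ^ 2)) B = Bm + B' + Bp)
    (hmid : ‖A' - B'‖ < δ)
    (hpm : ‖pm - qm‖ < δ) (hpp : ‖pp - qp‖ < δ)
    (hAp : ‖Ap - pp‖ < δ) (hBp : ‖Bp - qp‖ < δ)
    (hAm : ‖Am + pm‖ < δ) (hBm : ‖Bm + qm‖ < δ) :
    ‖cfc (fun t : ℝ => t / Real.sqrt (1 + t ^ 2)) A -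
        cfc (fun t : ℝ => t / Real.sqrt (1 + t ^ 2)) B‖ < 7 * δ := by
  rw [hdecA, hdecB]
  have key : (Am + A' + Ap) - (Bm + B' + Bp) =
      (((Am + pm) - (Bm + qm)) - (pm - qm)) + (A' - B') +
      (((Ap - pp) - (Bp - qp)) + (pp - qp)) := by abel
  rw [key]
  calc ‖(((Am + pm) - (Bm + qm)) - (pm - qm)) + (A' - B') +
      (((Ap - pp) - (Bp - qp)) + (pp - qp))‖
      ≤ ‖(((Am + pm) - (Bm + qm)) - (pm - qm)) + (A' - B')‖ +
        ‖((Ap - pp) - (Bp - qp)) + (pp - qp)‖ := norm_add_le _ _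
    _ ≤ (‖((Am + pm) - (Bm + qm)) - (pm - qm)‖ + ‖A' - B'‖) +
        (‖(Ap - pp) - (Bp - qp)‖ + ‖pp - qp‖) :=
        add_le_add (norm_add_le _ _) (norm_add_le _ _)
    _ ≤ ((‖(Am + pm) - (Bm + qm)‖ + ‖pm - qm‖) + ‖A' - B'‖) +
        ((‖Ap - pp‖ + ‖Bp - qp‖) + ‖pp - qp‖) :=
        add_le_add (add_le_add_left (norm_sub_le _ _) _)
          (add_le_add_left (norm_sub_le _ _) _)
    _ ≤ (((‖Am + pm‖ + ‖Bm + qm‖) + ‖pm - qm‖) + ‖A' - B'‖) +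
        ((‖Ap - pp‖ + ‖Bp - qp‖) + ‖pp - qp‖) := by
        gcongr; exact norm_sub_le _ _
    _ < 7 * δ := by linarith
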